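/- Let p ≥ 5 be a prime with p ≡ 2 (mod 3). Let θ ∈ ℚ_p and q ∈ ℕ satisfy |θ−1|_p < |(q:ℚ_p)|_p < 1 and (θ−1)(1−θ−q) ≠ 0. If y⁽¹⁾ ∈ ℚ_p is a root of the cubic y³ − (1+θ+θ²)y² − (2θ+1)(1−θ−q)y − (1−θ−q)² = 0, then |y⁽¹⁾ − 3 + q|_p < |y⁽¹⁾ − 3|_p = |q|_p. -/

import Mathlib

section helpers
variable {p : ℕ} [Fact p.Prime]

lemma pbc_dom {x d : ℚ_[p]} (h : ‖d‖ < ‖x‖) : ‖x + d‖ = ‖x‖ := by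
  have := Padic.add_eq_max_of_ne (q := x) (r := d) (ne_of_gt h)
  rw [this, max_eq_left h.le]

lemma pbc_norm_int (n : ℤ) (h : ¬ ((p:ℤ) ∣ n)) : ‖(n : ℚ_[p])‖ = 1 := by
  refine le_antisymm (Padic.norm_int_le_one _) ?_
  by_contra hlt
  exact h ((Padic.norm_intCast_lt_one_iff (k := n)).1 (lt_of_not_ge hlt))

lemma pbc_add_lt {x z : ℚ_[p]} {B : ℝ} (hx : ‖x‖ < B) (hz : ‖z‖ < B) : ‖x + z‖ < B :=
  lt_of_le_of_lt (Padic.nonarchimedean x z) (max_lt hx hz)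

lemma pbc_sub_lt {x z : ℚ_[p]} {B : ℝ} (hx : ‖x‖ < B) (hz : ‖z‖ < B) : ‖x - z‖ < B := by
  rw [sub_eq_add_neg]; exact pbc_add_lt hx (by rwa [norm_neg])

lemma pbc_neg_lt {x : ℚ_[p]} {B : ℝ} (hx : ‖x‖ < B) : ‖-x‖ < B := by rwa [norm_neg]

lemma pbc_no_root (hp5 : 5 ≤ p) (hp3 : p % 3 = 2) (v : ZMod p)
    (h : 3 * v ^ 2 - 3 * v + 1 = 0) : False := by
  haveI : NeZero p := ⟨by omega⟩
  have h1 : (1 : ZMod p) ≠ 0 := one_ne_zero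
  have hv0 : v ≠ 0 := by rintro rfl; simp at h
  have hcube : (v - 1) ^ 3 = v ^ 3 := by linear_combination -h
  set ζ : ZMod p := (v - 1) * v⁻¹ with hζ
  have hζ3 : ζ ^ 3 = 1 := by
    rw [hζ, mul_pow, hcube, ← mul_pow, mul_inv_cancel₀ hv0, one_pow]
  have hζ1 : ζ ≠ 1 := by
    intro hh
    have h2 : ζ * v = v := by rw [hh, one_mul]
    rw [hζ, mul_assoc, inv_mul_cancel₀ hv0, mul_one] at h2
    exact h1 (by linear_combination -h2)
  have hζ0 : ζ ≠ 0 := by intro hh; rw [hh] at hζ3; simp at hζ3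
  have hord3 : orderOf ζ = 3 := by
    rcases (Nat.prime_three).eq_one_or_self_of_dvd _ (orderOf_dvd_of_pow_eq_one hζ3) with h' | h'
    · exact absurd (orderOf_eq_one_iff.1 h') hζ1
    · exact h'
  have h3d : (3 : ℕ) ∣ p - 1 :=
    hord3 ▸ orderOf_dvd_of_pow_eq_one (ZMod.pow_card_sub_one_eq_one hζ0)
  obtain ⟨k, hk⟩ := h3d
  omega

end helpers

set_option maxHeartbeats 1000000 in
theorem potts_bethe_cubic_root_structure (p : ℕ) [Fact (Nat.Prime p)]
    (hp5 : 5 ≤ p) (hp3 : p % 3 = 2) (θ : ℚ_[p]) (q : ℕ)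
    (hθq : ‖θ - 1‖ < ‖(q : ℚ_[p])‖) (hq : ‖(q : ℚ_[p])‖ < 1)
    (hne : (θ - 1) * (1 - θ - (q : ℚ_[p])) ≠ 0)
    (y : ℚ_[p])
    (hy : y ^ 3 - (1 + θ + θ ^ 2) * y ^ 2 - (2 * θ + 1) * (1 - θ - (q : ℚ_[p])) * y
        - (1 - θ - (q : ℚ_[p])) ^ 2 = 0) :
    ‖y - 3 + (q : ℚ_[p])‖ < ‖y - 3‖ ∧ ‖y - 3‖ = ‖(q : ℚ_[p])‖ := by
  have hppr := (Fact.out : p.Prime)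
  set Q : ℚ_[p] := (q : ℚ_[p]) with hQdef
  set ε : ℚ_[p] := θ - 1 with hεdef
  set s : ℝ := ‖Q‖ with hsdef
  -- basic positivity
  have hε0 : ε ≠ 0 := fun h => hne (by rw [← hεdef] at *; rw [h, zero_mul])
  have hεpos : 0 < ‖ε‖ := norm_pos_iff.2 hε0
  have hs0 : 0 < s := lt_trans hεpos hθq
  have hε1 : ‖ε‖ < 1 := lt_trans hθq hq
  -- e = θ - 1 + q
  set e : ℚ_[p] := θ - 1 + Q with hedef
  have hene : e ≠ 0 := by
    intro h
    apply hne
    have : (1 : ℚ_[p]) - θ - Q = -e := by rw [hedef]; ring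
    rw [this, h]; ring
  have heQ : e = Q + ε := by rw [hedef, hεdef]; ring
  have he_norm : ‖e‖ = s := by rw [heQ, pbc_dom hθq]
  -- constants norms
  have hintnorm : ∀ n : ℤ, ¬ ((p:ℤ) ∣ n) → ‖((n:ℤ) : ℚ_[p])‖ = 1 := fun n => pbc_norm_int n
  have hnd : ∀ n : ℤ, 0 < n → n < 5 → ¬ ((p:ℤ) ∣ n) := by
    intro n hn0 hn5 hd
    have := Int.le_of_dvd hn0 hd
    omega
  have h3 : ‖(3 : ℚ_[p])‖ = 1 := by
    have := pbc_norm_int (p := p) 3 (by intro hd; have := Int.le_of_dvd (by norm_num) hd; omega)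
    exact_mod_cast this
  have h6 : ‖(6 : ℚ_[p])‖ = 1 := by
    have h2 : ‖(2 : ℚ_[p])‖ = 1 := by
      have := pbc_norm_int (p := p) 2 (by intro hd; have := Int.le_of_dvd (by norm_num) hd; omega)
      exact_mod_cast this
    have : (6 : ℚ_[p]) = 2 * 3 := by norm_num
    rw [this, norm_mul, h2, h3, one_mul]
  have h9 : ‖(9 : ℚ_[p])‖ = 1 := by
    have : (9 : ℚ_[p]) = 3 * 3 := by norm_num
    rw [this, norm_mul, h3, one_mul]
  have hint_le : ∀ x : ℚ_[p], ∀ n : ℤ, ‖((n:ℤ) : ℚ_[p]) * x‖ ≤ ‖x‖ := fun x n =>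
    (norm_mul _ _).le.trans (mul_le_of_le_one_left (norm_nonneg x) (Padic.norm_int_le_one n))
  have hnle : ∀ n : ℤ, ‖((n:ℤ) : ℚ_[p])‖ ≤ 1 := Padic.norm_int_le_one
  have h15le : ‖(15 : ℚ_[p])‖ ≤ 1 := by exact_mod_cast hnle 15
  have h18le : ‖(18 : ℚ_[p])‖ ≤ 1 := by exact_mod_cast hnle 18
  have h4le : ‖(4 : ℚ_[p])‖ ≤ 1 := by exact_mod_cast hnle 4
  have h2le : ‖(2 : ℚ_[p])‖ ≤ 1 := by exact_mod_cast hnle 2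
  have h3le : ‖(3 : ℚ_[p])‖ ≤ 1 := le_of_eq h3
  have hmul_le : ∀ (k x : ℚ_[p]), ‖k‖ ≤ 1 → ‖k * x‖ ≤ ‖x‖ := fun k x hk =>
    (norm_mul k x).le.trans (mul_le_of_le_one_left (norm_nonneg x) hk)
  -- small-term bounds
  have hQ2 : ‖Q ^ 2‖ < s := by rw [norm_pow]; nlinarith
  have hε2 : ‖ε ^ 2‖ < s := by rw [norm_pow]; nlinarith
  have hεQ : ‖ε * Q‖ < s := by rw [norm_mul]; nlinarith
  -- the u-cubic coefficients
  set a : ℚ_[p] := 6 - 3 * ε - ε ^ 2 with hadef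
  set b : ℚ_[p] := 9 - 15 * ε + 3 * Q - 4 * ε ^ 2 + 2 * (ε * Q) with hbdef
  set c : ℚ_[p] := 9 * Q - 18 * ε - Q ^ 2 - 4 * ε ^ 2 + 4 * (ε * Q) with hcdef
  have ha6 : ‖a - 6‖ < 1 := by
    have : a - 6 = -(3 * ε) - ε ^ 2 := by rw [hadef]; ring
    rw [this]
    exact pbc_sub_lt (pbc_neg_lt (lt_of_le_of_lt (hmul_le _ _ h3le) hε1))
      (lt_of_lt_of_le hε2 hq.le)
  have ha : ‖a‖ = 1 := by
    have h1 : a = 6 + (a - 6) := by ring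
    rw [h1, pbc_dom (by rw [h6]; exact ha6), h6]
  have hb9 : ‖b - 9‖ < 1 := by
    have : b - 9 = -(15 * ε) + 3 * Q - 4 * ε ^ 2 + 2 * (ε * Q) := by rw [hbdef]; ring
    rw [this]
    refine pbc_add_lt (pbc_sub_lt (pbc_add_lt (pbc_neg_lt ?_) ?_) ?_) ?_
    · exact lt_of_le_of_lt (hmul_le _ _ h15le) hε1
    · exact lt_of_le_of_lt (hmul_le _ _ h3le) hq
    · exact lt_of_le_of_lt (hmul_le _ _ h4le) (lt_trans hε2 hq)
    · exact lt_of_le_of_lt (hmul_le _ _ h2le) (lt_trans hεQ hq)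
  have hb : ‖b‖ = 1 := by
    have h1 : b = 9 + (b - 9) := by ring
    rw [h1, pbc_dom (by rw [h9]; exact hb9), h9]
  have hc9 : ‖c - 9 * Q‖ < s := by
    have : c - 9 * Q = -(18 * ε) - Q ^ 2 - 4 * ε ^ 2 + 4 * (ε * Q) := by rw [hcdef]; ring
    rw [this]
    refine pbc_add_lt (pbc_sub_lt (pbc_sub_lt (pbc_neg_lt ?_) ?_) ?_) ?_
    · exact lt_of_le_of_lt (hmul_le _ _ h18le) hθq
    · exact hQ2
    · exact lt_of_le_of_lt (hmul_le _ _ h4le) hε2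
    · exact lt_of_le_of_lt (hmul_le _ _ h4le) hεQ
  have hc : ‖c‖ = s := by
    have h1 : c = 9 * Q + (c - 9 * Q) := by ring
    have h9Q : ‖(9 : ℚ_[p]) * Q‖ = s := by rw [norm_mul, h9, one_mul]
    rw [h1, pbc_dom (by rw [h9Q]; exact hc9), h9Q]
  -- the u-cubic
  set u : ℚ_[p] := y - 3 with hudef
  have hu_cubic : u ^ 3 + a * u ^ 2 + b * u + c = 0 := by
    rw [hudef, hadef, hbdef, hcdef, hεdef]
    linear_combination hy
  have hy_cubic : (u+3)^3 - (3+3*ε+ε^2)*(u+3)^2 + (3+2*ε)*(e*(u+3)) - e^2 = 0 := by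
    rw [hudef, hεdef, hedef]
    linear_combination hy
  clear_value Q ε s e a b c u
  clear hy hne
  have ht0 : (0:ℝ) ≤ ‖u‖ := norm_nonneg u
  have pow31 : ∀ x : ℝ, 0 ≤ x → x ≤ 1 → x ^ 3 ≤ x := fun x h0 h1 => by
    calc x ^ 3 ≤ x ^ 1 := pow_le_pow_of_le_one h0 h1 (by norm_num)
    _ = x := pow_one x
  have pow21 : ∀ x : ℝ, 0 ≤ x → x ≤ 1 → x ^ 2 ≤ x := fun x h0 h1 => by
    calc x ^ 2 ≤ x ^ 1 := pow_le_pow_of_le_one h0 h1 (by norm_num)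
    _ = x := pow_one x
  have ht_le1 : ‖u‖ ≤ 1 := by
    by_contra hgt
    push_neg at hgt
    have e1 : u ^ 3 = -(a * u ^ 2) - b * u - c := by linear_combination hu_cubic
    have hR : ‖-(a * u ^ 2) - b * u - c‖ < ‖u‖ ^ 3 := by
      refine pbc_sub_lt (pbc_sub_lt (pbc_neg_lt ?_) ?_) ?_
      · rw [norm_mul, ha, one_mul, norm_pow]; exact pow_lt_pow_right₀ hgt (by norm_num)
      · rw [norm_mul, hb, one_mul]
        calc ‖u‖ = ‖u‖ ^ 1 := (pow_one _).symm
        _ < ‖u‖ ^ 3 := pow_lt_pow_right₀ hgt (by norm_num)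
      · rw [hc]; exact lt_trans hq (lt_trans hgt (by
          calc ‖u‖ = ‖u‖ ^ 1 := (pow_one _).symm
          _ < ‖u‖ ^ 3 := pow_lt_pow_right₀ hgt (by norm_num)))
    rw [← e1, norm_pow] at hR
    exact absurd hR (lt_irrefl _)
  have hmid : ¬ (s < ‖u‖ ∧ ‖u‖ < 1) := by
    rintro ⟨hst, ht1⟩
    have htpos : 0 < ‖u‖ := lt_trans hs0 hst
    have e2 : b * u = -(u ^ 3) - a * u ^ 2 - c := by linear_combination hu_cubic
    have hR : ‖-(u ^ 3) - a * u ^ 2 - c‖ < ‖u‖ := by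
      refine pbc_sub_lt (pbc_sub_lt (pbc_neg_lt ?_) ?_) ?_
      · rw [norm_pow]
        calc ‖u‖ ^ 3 < ‖u‖ ^ 1 := pow_lt_pow_right_of_lt_one₀ htpos ht1 (by norm_num)
        _ = ‖u‖ := pow_one _
      · rw [norm_mul, ha, one_mul, norm_pow]
        calc ‖u‖ ^ 2 < ‖u‖ ^ 1 := pow_lt_pow_right_of_lt_one₀ htpos ht1 (by norm_num)
        _ = ‖u‖ := pow_one _
      · rw [hc]; exact hst
    rw [← e2, norm_mul, hb, one_mul] at hR
    exact absurd hR (lt_irrefl _)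
  have hlow : ¬ (‖u‖ < s) := by
    intro hts
    have ht1 : ‖u‖ ≤ 1 := ht_le1
    have e3 : c = -(u ^ 3) - a * u ^ 2 - b * u := by linear_combination hu_cubic
    have hR : ‖-(u ^ 3) - a * u ^ 2 - b * u‖ < s := by
      refine pbc_sub_lt (pbc_sub_lt (pbc_neg_lt ?_) ?_) ?_
      · rw [norm_pow]; exact lt_of_le_of_lt (pow31 _ ht0 ht1) hts
      · rw [norm_mul, ha, one_mul, norm_pow]; exact lt_of_le_of_lt (pow21 _ ht0 ht1) hts
      · rw [norm_mul, hb, one_mul]; exact hts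
    rw [← e3, hc] at hR
    exact absurd hR (lt_irrefl _)
  push_neg at hlow
  have hcases : ‖u‖ = s ∨ ‖u‖ = 1 := by
    rcases eq_or_lt_of_le ht_le1 with h1 | h1
    · exact Or.inr h1
    · left
      by_contra hne'
      exact hmid ⟨lt_of_le_of_ne hlow (Ne.symm hne'), h1⟩
  have hA : ‖(3:ℚ_[p]) + 3*ε + ε^2‖ = 1 := by
    have hform : (3:ℚ_[p]) + 3*ε + ε^2 = 3 + (3*ε + ε^2) := by ring
    rw [hform, pbc_dom (by
      rw [h3]
      exact pbc_add_lt (lt_of_le_of_lt (hmul_le _ _ h3le) hε1) (lt_trans hε2 hq)), h3]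
  have h32 : ‖(3:ℚ_[p]) + 2*ε‖ ≤ 1 :=
    le_trans (Padic.nonarchimedean _ _)
      (max_le h3le (le_of_lt (lt_of_le_of_lt (hmul_le _ _ h2le) hε1)))
  rcases hcases with hts | ht1
  · -- main case : ‖u‖ = s
    refine ⟨?_, hts⟩
    have e5 : (9:ℚ_[p]) * (u + Q) = -(u ^ 3) - a * u ^ 2 - (b - 9) * u - (c - 9 * Q) := by
      linear_combination hu_cubic
    have hR : ‖-(u ^ 3) - a * u ^ 2 - (b - 9) * u - (c - 9 * Q)‖ < s := by
      refine pbc_sub_lt (pbc_sub_lt (pbc_sub_lt (pbc_neg_lt ?_) ?_) ?_) ?_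
      · rw [norm_pow, hts]
        calc s ^ 3 < s ^ 1 := pow_lt_pow_right_of_lt_one₀ hs0 hq (by norm_num)
        _ = s := pow_one _
      · rw [norm_mul, ha, one_mul, norm_pow, hts]
        calc s ^ 2 < s ^ 1 := pow_lt_pow_right_of_lt_one₀ hs0 hq (by norm_num)
        _ = s := pow_one _
      · rw [norm_mul, hts]
        exact mul_lt_of_lt_one_left hs0 hb9
      · exact hc9
    rw [← e5, norm_mul, h9, one_mul] at hR
    rw [hts]
    exact hR
  · -- impossible case : ‖u‖ = 1
    exfalso
    -- first: ‖u + 3‖ < 1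
    have e4 : u * (u + 3) ^ 2 = -((a - 6) * u ^ 2) - (b - 9) * u - c := by
      linear_combination hu_cubic
    have hR : ‖-((a - 6) * u ^ 2) - (b - 9) * u - c‖ < 1 := by
      refine pbc_sub_lt (pbc_sub_lt (pbc_neg_lt ?_) ?_) ?_
      · rw [norm_mul, norm_pow, ht1]; simpa using ha6
      · rw [norm_mul, ht1, mul_one]; exact hb9
      · rw [hc]; exact hq
    rw [← e4, norm_mul, norm_pow, ht1, one_mul] at hR
    have hYlt : ‖u + 3‖ < 1 := by
      by_contra hge
      push_neg at hge
      have h1 : (1:ℝ) * 1 ≤ ‖u+3‖ * ‖u+3‖ :=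
        mul_le_mul hge hge zero_le_one (le_trans zero_le_one hge)
      rw [one_mul] at h1
      rw [sq] at hR
      linarith
    rcases lt_trichotomy ‖u + 3‖ s with hY | hY | hY
    · -- ‖u+3‖ < s : impossible
      have e6 : e^2 = (u+3)^3 - (3+3*ε+ε^2)*(u+3)^2 + (3+2*ε)*(e*(u+3)) := by
        linear_combination -hy_cubic
      have hR6 : ‖(u+3)^3 - (3+3*ε+ε^2)*(u+3)^2 + (3+2*ε)*(e*(u+3))‖ < s^2 := by
        have hY0 : (0:ℝ) ≤ ‖u + 3‖ := norm_nonneg _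
        have hYs2 : ‖u+3‖^2 < s^2 := pow_lt_pow_left₀ hY hY0 (by norm_num)
        refine pbc_add_lt (pbc_sub_lt ?_ ?_) ?_
        · rw [norm_pow]
          exact lt_of_le_of_lt (pow_le_pow_of_le_one hY0 hYlt.le (by norm_num : (2:ℕ) ≤ 3)) hYs2
        · rw [norm_mul, hA, one_mul, norm_pow]; exact hYs2
        · refine lt_of_le_of_lt (hmul_le _ _ h32) ?_
          rw [norm_mul, he_norm]
          calc s * ‖u+3‖ < s * s := by exact mul_lt_mul_of_pos_left hY hs0
          _ = s^2 := (sq s).symm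
      rw [← e6, norm_pow, he_norm] at hR6
      exact absurd hR6 (lt_irrefl _)
    · -- ‖u+3‖ = s : ZMod argument
      have hY0 : u + 3 ≠ 0 := by
        intro hh
        rw [hh, norm_zero] at hY
        exact absurd hY.symm (ne_of_gt hs0)
      set w : ℚ_[p] := (u + 3) / e with hwdef
      have hw1 : ‖w‖ = 1 := by
        rw [hwdef, norm_div, hY, he_norm, div_self (ne_of_gt hs0)]
      have hwe : w * e = u + 3 := by rw [hwdef]; exact div_mul_cancel₀ _ hene
      have key1 : e^2 * (3*w^2 - 3*w + 1) = 3*(u+3)^2 - 3*(e*(u+3)) + e^2 := by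
        linear_combination (3*(u+3) + 3*(w*e) - 3*e) * hwe
      have key2 : 3*(u+3)^2 - 3*(e*(u+3)) + e^2
          = (u+3)^3 - 3*(ε*(u+3)^2) - ε^2*(u+3)^2 + 2*(ε*(e*(u+3))) := by
        linear_combination -hy_cubic
      have hs2pos : (0:ℝ) < s^2 := by positivity
      have hRT : ‖(u+3)^3 - 3*(ε*(u+3)^2) - ε^2*(u+3)^2 + 2*(ε*(e*(u+3)))‖ < s^2 := by
        refine pbc_add_lt (pbc_sub_lt (pbc_sub_lt ?_ ?_) ?_) ?_
        · rw [norm_pow, hY]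
          calc s ^ 3 < s ^ 2 := pow_lt_pow_right_of_lt_one₀ hs0 hq (by norm_num)
          _ = s^2 := rfl
        · refine lt_of_le_of_lt (hmul_le _ _ h3le) ?_
          rw [norm_mul, norm_pow, hY]
          calc ‖ε‖ * s^2 < 1 * s^2 := mul_lt_mul_of_pos_right hε1 hs2pos
          _ = s^2 := one_mul _
        · rw [norm_mul, norm_pow, norm_pow, hY]
          have : ‖ε‖^2 < 1 := pow_lt_one₀ (norm_nonneg ε) hε1 (by norm_num)
          calc ‖ε‖^2 * s^2 < 1 * s^2 := mul_lt_mul_of_pos_right this hs2pos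
          _ = s^2 := one_mul _
        · refine lt_of_le_of_lt (hmul_le _ _ h2le) ?_
          rw [norm_mul, norm_mul, he_norm, hY]
          calc ‖ε‖ * (s * s) < 1 * (s * s) := by
                refine mul_lt_mul_of_pos_right hε1 (by positivity)
          _ = s^2 := by ring
      rw [← key2, ← key1, norm_mul, norm_pow, he_norm] at hRT
      have hg1 : ‖3*w^2 - 3*w + 1‖ < 1 := by
        have h' : s^2 * ‖3*w^2 - 3*w + 1‖ < s^2 * 1 := by rwa [mul_one]
        exact (mul_lt_mul_iff_right₀ hs2pos).1 h'
      -- lift to ℤ_[p]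
      set W : ℤ_[p] := ⟨w, le_of_eq hw1⟩ with hWdef
      have hWc : ((W : ℚ_[p])) = w := rfl
      set G : ℤ_[p] := 3*W^2 - 3*W + 1 with hGdef
      have h3c : (((3:ℤ_[p]) : ℚ_[p])) = 3 := by
        have := PadicInt.coe_natCast (p := p) 3
        norm_num at this
        exact this
      have hGc : ((G : ℚ_[p])) = 3*w^2 - 3*w + 1 := by
        rw [hGdef, PadicInt.coe_add, PadicInt.coe_sub, PadicInt.coe_mul, PadicInt.coe_mul,
          PadicInt.coe_pow, PadicInt.coe_one, h3c, hWc]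
      have hGlt : ‖G‖ < 1 := by rw [PadicInt.norm_def, hGc]; exact hg1
      obtain ⟨k, hk⟩ := (PadicInt.norm_lt_one_iff_dvd G).1 hGlt
      have hG0 : PadicInt.toZMod G = 0 := by
        rw [hk, map_mul]
        have : PadicInt.toZMod (p : ℤ_[p]) = 0 := by simp
        rw [this, zero_mul]
      set v : ZMod p := PadicInt.toZMod W with hvdef
      have hveq : 3*v^2 - 3*v + 1 = 0 := by
        rw [hvdef, ← hG0, hGdef]
        push_cast [map_sub, map_add, map_mul, map_pow, map_one, map_ofNat]
        ring
      exact pbc_no_root hp5 hp3 v hveq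
    · -- s < ‖u+3‖ (< 1) : impossible
      have htpos : 0 < ‖u+3‖ := lt_trans hs0 hY
      have e7 : (3+3*ε+ε^2)*(u+3)^2 = (u+3)^3 + (3+2*ε)*(e*(u+3)) - e^2 := by
        linear_combination -hy_cubic
      have hR7 : ‖(u+3)^3 + (3+2*ε)*(e*(u+3)) - e^2‖ < ‖u+3‖^2 := by
        refine pbc_sub_lt (pbc_add_lt ?_ ?_) ?_
        · rw [norm_pow]
          exact pow_lt_pow_right_of_lt_one₀ htpos hYlt (by norm_num)
        · refine lt_of_le_of_lt (hmul_le _ _ h32) ?_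
          rw [norm_mul, he_norm]
          calc s * ‖u+3‖ < ‖u+3‖ * ‖u+3‖ := mul_lt_mul_of_pos_right hY htpos
          _ = ‖u+3‖^2 := (sq _).symm
        · rw [norm_pow, he_norm]
          exact pow_lt_pow_left₀ hY (le_of_lt hs0) (by norm_num)
      rw [← e7, norm_mul, hA, one_mul, norm_pow] at hR7
      exact absurd hR7 (lt_irrefl _)
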